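/- Let q be an even natural number, let a be an integer with 3 ≤ a ≤ q/2 + 1, and set m_a = (q+1)² − a. Then the pseudoachromatic index of the complete graph K_{m_a} satisfies ψ(m_a) ≤ ⌊(m_a(m_a−1)/2)/(q/2 + 1)⌋. -/

import Mathlib

/-- A complete edge-colouring of the complete graph `K_m` with `k` colours:
every colour appears on some edge, and every two distinct colours appear
on two edges sharing a common vertex. -/
def IsCompleteEdgeColouring {m k : ℕ} (Γ : Sym2 (Fin m) → Fin k) : Prop :=
  (∀ c : Fin k, ∃ x y : Fin m, x ≠ y ∧ Γ s(x, y) = c) ∧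
  (∀ c₁ c₂ : Fin k, c₁ ≠ c₂ →
    ∃ x y z : Fin m, x ≠ y ∧ x ≠ z ∧ Γ s(x, y) = c₁ ∧ Γ s(x, z) = c₂)

/-- The pseudoachromatic index of the complete graph `K_m`: the largest number of
colours in a complete edge-colouring of `K_m`. -/
noncomputable def pseudoachromaticIndex (m : ℕ) : ℕ :=
  sSup {k : ℕ | ∃ Γ : Sym2 (Fin m) → Fin k, IsCompleteEdgeColouring Γ}


open Finset

lemma two_mul_choose_two (n : ℕ) : 2 * n.choose 2 = n * (n - 1) := by
  rcases n with _ | n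
  · simp
  · have h2 : 2 ∣ (n + 1) * n := by
      rw [mul_comm]; exact (Nat.even_mul_succ_self n).two_dvd
    rw [Nat.choose_two_right, Nat.succ_sub_one, Nat.mul_div_cancel' h2]

lemma exists_rep' {α : Type*} (z : Sym2 α) : ∃ x y, z = s(x, y) :=
  Sym2.ind (fun x y => ⟨x, y, rfl⟩) z

/-- Main counting dichotomy. -/
lemma main_count {m k : ℕ} (Γ : Sym2 (Fin m) → Fin k)
    (hΓ : IsCompleteEdgeColouring Γ) (h : ℕ) :
    k * (h + 1) ≤ m.choose 2 ∨
    ∃ e s : ℕ, 1 ≤ e ∧ e ≤ h ∧ s ≤ 2 * e ∧ s ≤ m ∧ 1 ≤ k ∧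
      e + (k - 1) + (m - s).choose 2 ≤ m.choose 2 := by
  classical
  set edges : Finset (Sym2 (Fin m)) := univ.filter (fun z => ¬ z.IsDiag) with hedgesdef
  have hedges : edges.card = m.choose 2 := by
    rw [hedgesdef, ← Fintype.card_subtype, Sym2.card_subtype_not_diag, Fintype.card_fin]
  by_cases hall : ∀ c : Fin k, h + 1 ≤ (edges.filter (fun z => Γ z = c)).card
  · left
    have hfib : edges.card = ∑ c : Fin k, (edges.filter (fun z => Γ z = c)).card :=
      card_eq_sum_card_fiberwise (fun x _ => mem_univ _)
    calc k * (h + 1) = ∑ _c : Fin k, (h + 1) := by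
            rw [Finset.sum_const, card_univ, Fintype.card_fin, smul_eq_mul]
      _ ≤ ∑ c : Fin k, (edges.filter (fun z => Γ z = c)).card :=
            Finset.sum_le_sum (fun c _ => hall c)
      _ = edges.card := hfib.symm
      _ = m.choose 2 := hedges
  · right
    push_neg at hall
    obtain ⟨c₀, hc₀⟩ := hall
    set B : Finset (Sym2 (Fin m)) := edges.filter (fun z => Γ z = c₀) with hBdef
    have hc₀' : B.card ≤ h := by omega
    -- B is nonempty
    obtain ⟨x, y, hxy, hcol⟩ := hΓ.1 c₀
    have hxyB : s(x, y) ∈ B := by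
      simp only [hBdef, hedgesdef, mem_filter, mem_univ, true_and]
      exact ⟨by simpa [Sym2.mk_isDiag_iff] using hxy, hcol⟩
    have hB1 : 1 ≤ B.card := Finset.card_pos.mpr ⟨_, hxyB⟩
    set S : Finset (Fin m) := B.biUnion (fun z => univ.filter (fun v => v ∈ z)) with hSdef
    have hScard : S.card ≤ 2 * B.card := by
      refine le_trans card_biUnion_le ?_
      calc ∑ z ∈ B, (univ.filter (fun v => v ∈ z)).card
          ≤ ∑ _z ∈ B, 2 := by
            refine Finset.sum_le_sum (fun z _ => ?_)
            obtain ⟨u, v, rfl⟩ := exists_rep' z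
            refine le_trans (Finset.card_le_card (fun w hw => ?_)) (Finset.card_insert_le u {v} |>.trans (by simp))
            simp only [mem_filter, Sym2.mem_iff] at hw
            rcases hw.2 with rfl | rfl
            · exact Finset.mem_insert_self _ _
            · exact Finset.mem_insert_of_mem (Finset.mem_singleton_self _)
        _ = 2 * B.card := by rw [Finset.sum_const, smul_eq_mul, Nat.mul_comm]
    have hmemS : ∀ z ∈ B, ∀ v, v ∈ z → v ∈ S := by
      intro z hz v hv
      simp only [hSdef, Finset.mem_biUnion]
      exact ⟨z, hz, by simp [hv]⟩
    set I : Finset (Sym2 (Fin m)) := edges.filter (fun z => ∃ v ∈ S, v ∈ z) with hIdef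
    -- lower bound on I.card
    have hlow : B.card + (k - 1) ≤ I.card := by
      have hfib : I.card = ∑ c : Fin k, (I.filter (fun z => Γ z = c)).card :=
        card_eq_sum_card_fiberwise (fun x _ => mem_univ _)
      have hc0term : B.card ≤ (I.filter (fun z => Γ z = c₀)).card := by
        refine Finset.card_le_card (fun z hz => ?_)
        have hzedges : z ∈ edges := (Finset.mem_filter.mp hz).1
        have hzc : Γ z = c₀ := (Finset.mem_filter.mp hz).2
        obtain ⟨u, v, rfl⟩ := exists_rep' z
        have : u ∈ S := hmemS _ hz u (Sym2.mem_mk_left u v)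
        simp only [mem_filter, hIdef]
        exact ⟨⟨hzedges, u, this, Sym2.mem_mk_left u v⟩, hzc⟩
      have hother : ∀ c ∈ univ.erase c₀, 1 ≤ (I.filter (fun z => Γ z = c)).card := by
        intro c hc
        have hne : c₀ ≠ c := (Finset.ne_of_mem_erase hc).symm
        obtain ⟨x', y', z', hxy', hxz', hcol1, hcol2⟩ := hΓ.2 c₀ c hne
        have hxyB' : s(x', y') ∈ B := by
          simp only [hBdef, hedgesdef, mem_filter, mem_univ, true_and]
          exact ⟨by simpa [Sym2.mk_isDiag_iff] using hxy', hcol1⟩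
        have hx'S : x' ∈ S := hmemS _ hxyB' x' (Sym2.mem_mk_left x' y')
        refine Finset.card_pos.mpr ⟨s(x', z'), ?_⟩
        simp only [mem_filter, hIdef, hedgesdef, mem_univ, true_and]
        exact ⟨⟨by simpa [Sym2.mk_isDiag_iff] using hxz', x', hx'S, Sym2.mem_mk_left x' z'⟩, hcol2⟩
      have hsum : (∑ c ∈ univ.erase c₀, (I.filter (fun z => Γ z = c)).card) +
          (I.filter (fun z => Γ z = c₀)).card
          = ∑ c : Fin k, (I.filter (fun z => Γ z = c)).card :=
        Finset.sum_erase_add _ _ (Finset.mem_univ c₀)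
      have herase : (k - 1 : ℕ) ≤ ∑ c ∈ univ.erase c₀, (I.filter (fun z => Γ z = c)).card := by
        have hcard : (univ.erase c₀).card = k - 1 := by
          rw [Finset.card_erase_of_mem (mem_univ _), card_univ, Fintype.card_fin]
        calc (k - 1 : ℕ) = ∑ _c ∈ univ.erase c₀, 1 := by
              rw [Finset.sum_const, smul_eq_mul, mul_one, hcard]
          _ ≤ _ := Finset.sum_le_sum hother
      omega
    -- upper bound
    set A : Finset (Sym2 (Fin m)) := edges.filter (fun z => ∀ v ∈ z, v ∉ S) with hAdef
    have hdisj : Disjoint I A := by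
      rw [Finset.disjoint_left]
      intro z hzI hzA
      obtain ⟨v, hvS, hvz⟩ := (Finset.mem_filter.mp hzI).2
      exact (Finset.mem_filter.mp hzA).2 v hvz hvS
    have hIA : I.card + A.card ≤ edges.card := by
      rw [← Finset.card_union_of_disjoint hdisj]
      exact Finset.card_le_card (Finset.union_subset (Finset.filter_subset _ _)
        (Finset.filter_subset _ _))
    have hAcard : (m - S.card).choose 2 ≤ A.card := by
      have hcardα : Fintype.card {v : Fin m // v ∉ S} = m - S.card := by
        rw [Fintype.card_subtype_compl, Fintype.card_fin, Fintype.card_coe]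
      rw [← hcardα, ← Sym2.card_subtype_not_diag, Fintype.card_subtype]
      refine Finset.card_le_card_of_injOn (Sym2.map Subtype.val) ?_ ?_
      · intro z hz
        simp only [Finset.mem_coe, mem_filter, mem_univ, true_and] at hz
        obtain ⟨u, v, rfl⟩ := exists_rep' z
        rw [Sym2.map_pair_eq]
        simp only [Finset.mem_coe, hAdef, hedgesdef, mem_filter, mem_univ, true_and]
        constructor
        · simp only [Sym2.mk_isDiag_iff] at hz ⊢
          exact fun hc => hz (Subtype.val_injective hc)
        · intro w hw
          rw [Sym2.mem_iff] at hw
          rcases hw with rfl | rfl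
          · exact u.2
          · exact v.2
      · exact (Sym2.map.injective Subtype.val_injective).injOn
    refine ⟨B.card, S.card, hB1, hc₀', hScard, ?_, Fin.pos c₀, ?_⟩
    · exact le_trans (Finset.card_le_univ S) (by simp)
    · omega

lemma arith_final (h a m e s k : ℤ) (hh : 2 ≤ h) (ha1 : 3 ≤ a) (ha2 : a ≤ h + 1)
    (hm : m = 4 * h ^ 2 + 4 * h + 1 - a) (he1 : 1 ≤ e) (heh : e ≤ h) (hs0 : 0 ≤ s)
    (hse : s ≤ 2 * e) (hk : 1 ≤ k)
    (key : 2 * e + 2 * (k - 1) + (m - s) * (m - s - 1) ≤ m * (m - 1)) :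
    k * (h + 1) * 2 ≤ m * (m - 1) := by
  have hm' : 4 * h ^ 2 + 3 * h ≤ m := by linarith
  have hsq : 4 * h + 4 ≤ 4 * h ^ 2 + 3 * h := by nlinarith
  have t1 : s * (2 * m - s - 1) ≤ 2 * e * (2 * m - 2 * e - 1) := by
    nlinarith [mul_nonneg (by linarith : (0:ℤ) ≤ 2 * e - s)
      (by linarith : (0:ℤ) ≤ 2 * m - s - 2 * e - 1)]
  have t2 : 2 * k ≤ 4 * e * (m - e - 1) + 2 := by nlinarith [key, t1]
  have t3 : 4 * e * (m - e - 1) ≤ 4 * h * (m - h - 1) := by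
    nlinarith [mul_nonneg (by linarith : (0:ℤ) ≤ h - e)
      (by linarith : (0:ℤ) ≤ m - h - e - 1)]
  have P : 2 * (h + 1) * (2 * h * (m - h - 1) + 1) ≤ m * (m - 1) := by
    nlinarith [mul_nonneg (by linarith : (0:ℤ) ≤ h + 1 - a)
        (by nlinarith : (0:ℤ) ≤ 4 * h ^ 2 + 3 * h - a),
      mul_nonneg (by linarith : (0:ℤ) ≤ h - 2) (by linarith : (0:ℤ) ≤ h + 1)]
  have t4 : 2 * k ≤ 4 * h * (m - h - 1) + 2 := by linarith
  have t5 : (h + 1) * (2 * k) ≤ (h + 1) * (4 * h * (m - h - 1) + 2) :=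
    mul_le_mul_of_nonneg_left t4 (by linarith)
  nlinarith [t5, P]

theorem stmt_6 (q a : ℕ) (hq : Even q) (ha1 : 3 ≤ a) (ha2 : a ≤ q / 2 + 1)
    (m : ℕ) (hm : m = (q + 1) ^ 2 - a) :
    pseudoachromaticIndex m ≤ (m * (m - 1) / 2) / (q / 2 + 1) := by
  set h := q / 2 with hhdef
  have hq2 : q = 2 * h := by
    obtain ⟨r, hr⟩ := hq; omega
  have hh2 : 2 ≤ h := by omega
  have hma : m = 4 * h ^ 2 + 4 * h + 1 - a := by
    rw [hm, hq2]; congr 1; ring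
  have hH : h ^ 2 = h * h := sq h
  have hmge : 4 * h ^ 2 + 3 * h ≤ m := by
    rw [hma, hH]; omega
  have hm1 : 1 ≤ m := by omega
  have hmz : (m : ℤ) = 4 * (h : ℤ) ^ 2 + 4 * h + 1 - a := by
    have h1 : a ≤ 4 * h ^ 2 + 4 * h + 1 := by omega
    have h2 : ((4 * h ^ 2 + 4 * h + 1 - a : ℕ) : ℤ) = 4 * (h:ℤ) ^ 2 + 4 * h + 1 - a := by
      push_cast [h1]; ring
    rw [hma, h2]
  rw [pseudoachromaticIndex]
  rcases Set.eq_empty_or_nonempty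
      {k : ℕ | ∃ Γ : Sym2 (Fin m) → Fin k, IsCompleteEdgeColouring Γ} with hemp | hne
  · rw [hemp, csSup_empty]; exact Nat.zero_le _
  refine csSup_le hne ?_
  rintro k ⟨Γ, hΓ⟩
  rw [Nat.le_div_iff_mul_le (by omega : 0 < h + 1),
      Nat.le_div_iff_mul_le (by omega : 0 < 2)]
  -- goal : k * (h+1) * 2 ≤ m * (m-1)
  have hchoose : 2 * m.choose 2 = m * (m - 1) := two_mul_choose_two m
  rcases main_count Γ hΓ h with hcase | ⟨e, s, he1, heh, hse, hsm, hk1, hkey⟩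
  · linarith [hcase, hchoose]
  · have hms1 : 1 ≤ m - s := by omega
    have hkey2 : 2 * e + 2 * (k - 1) + (m - s) * (m - s - 1) ≤ m * (m - 1) := by
      linarith [hkey, two_mul_choose_two (m - s), hchoose]
    have hkeyZ : 2 * (e:ℤ) + 2 * ((k:ℤ) - 1) + ((m:ℤ) - s) * ((m:ℤ) - s - 1)
        ≤ (m:ℤ) * ((m:ℤ) - 1) := by
      zify [hk1, hsm, hms1, hm1] at hkey2
      convert hkey2 using 2 <;> push_cast [hsm] <;> ring
    have := arith_final h a m e s k (by exact_mod_cast hh2) (by exact_mod_cast ha1)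
      (by exact_mod_cast ha2) hmz (by exact_mod_cast he1) (by exact_mod_cast heh)
      (Int.natCast_nonneg s) (by exact_mod_cast hse) (by exact_mod_cast hk1) hkeyZ
    have hgoalZ : (k : ℤ) * ((h:ℤ) + 1) * 2 ≤ (m:ℤ) * ((m:ℤ) - 1) := this
    zify [hm1]
    exact_mod_cast hgoalZ
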